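/- Fix real numbers ℓ and t with ℓ·t ≠ 0 and a sign ε ∈ {+1,-1}, and let e₁, e₂, e₃, e₄ be the standard basis of ℂ⁴. Let J : ℂ⁴ → ℂ⁴ be the unique ℂ-linear map which equals multiplication by i on the span of {e₁ + ε·e^{2ℓt}·e₂, e₃ + ε·e^{2ℓt}·e₄} and equals multiplication by -i on the span of {e₁ + ε·e^{-2ℓt}·e₂, e₃ + ε·e^{-2ℓt}·e₄} (these four vectors form a basis of ℂ⁴ since e^{2ℓt} ≠ e^{-2ℓt}). Define F_α = (e₁ - e₄)/√2, G_α = i·(e₁ + e₄)/√2, F_d = (e₃ - e₂)/√2, G_d = i·(e₃ + e₂)/√2, and F^± = (F_α ± ε·F_d)/√2, G^± = (G_α ± ε·G_d)/√2. Then J F⁺ = -coth(ℓt)·G⁺ and J F⁻ = -tanh(ℓt)·G⁻. -/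

import Mathlib

set_option maxHeartbeats 1000000 in
/-- The computational core of Lemma 3.8 of the paper, in `ℂ⁴` with standard basis
`e₁ = ![1,0,0,0]`, `e₂ = ![0,1,0,0]`, `e₃ = ![0,0,1,0]`, `e₄ = ![0,0,0,1]`:
if `J` is `ℂ`-linear, equal to multiplication by `i` on
`e₁ + ε e^{2ℓt} e₂` and `e₃ + ε e^{2ℓt} e₄`, and equal to multiplication by `-i` on
`e₁ + ε e^{-2ℓt} e₂` and `e₃ + ε e^{-2ℓt} e₄`, then with
`F_α = (e₁ - e₄)/√2`, `G_α = i(e₁ + e₄)/√2`, `F_d = (e₃ - e₂)/√2`, `G_d = i(e₃ + e₂)/√2`,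
`F± = (F_α ± ε F_d)/√2`, `G± = (G_α ± ε G_d)/√2`, one has
`J F⁺ = -coth(ℓt) G⁺` and `J F⁻ = -tanh(ℓt) G⁻`. -/
theorem stmt_10 (l t ε : ℝ) (hlt : l * t ≠ 0) (hε : ε = 1 ∨ ε = -1)
    (J : (Fin 4 → ℂ) →ₗ[ℂ] (Fin 4 → ℂ))
    (h1 : J (![1, 0, 0, 0] + ((ε : ℂ) * (Real.exp (2 * l * t) : ℂ)) • ![0, 1, 0, 0]) =
      Complex.I • (![1, 0, 0, 0] + ((ε : ℂ) * (Real.exp (2 * l * t) : ℂ)) • ![0, 1, 0, 0]))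
    (h2 : J (![0, 0, 1, 0] + ((ε : ℂ) * (Real.exp (2 * l * t) : ℂ)) • ![0, 0, 0, 1]) =
      Complex.I • (![0, 0, 1, 0] + ((ε : ℂ) * (Real.exp (2 * l * t) : ℂ)) • ![0, 0, 0, 1]))
    (h3 : J (![1, 0, 0, 0] + ((ε : ℂ) * (Real.exp (-(2 * l * t)) : ℂ)) • ![0, 1, 0, 0]) =
      (-Complex.I) • (![1, 0, 0, 0] + ((ε : ℂ) * (Real.exp (-(2 * l * t)) : ℂ)) • ![0, 1, 0, 0]))
    (h4 : J (![0, 0, 1, 0] + ((ε : ℂ) * (Real.exp (-(2 * l * t)) : ℂ)) • ![0, 0, 0, 1]) =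
      (-Complex.I) • (![0, 0, 1, 0] + ((ε : ℂ) * (Real.exp (-(2 * l * t)) : ℂ)) • ![0, 0, 0, 1]))
    (Fα Gα Fd Gd Fp Fm Gp Gm : Fin 4 → ℂ)
    (hFα : Fα = ((Real.sqrt 2 : ℂ))⁻¹ • (![1, 0, 0, 0] - ![0, 0, 0, 1]))
    (hGα : Gα = (Complex.I * ((Real.sqrt 2 : ℂ))⁻¹) • (![1, 0, 0, 0] + ![0, 0, 0, 1]))
    (hFd : Fd = ((Real.sqrt 2 : ℂ))⁻¹ • (![0, 0, 1, 0] - ![0, 1, 0, 0]))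
    (hGd : Gd = (Complex.I * ((Real.sqrt 2 : ℂ))⁻¹) • (![0, 0, 1, 0] + ![0, 1, 0, 0]))
    (hFp : Fp = ((Real.sqrt 2 : ℂ))⁻¹ • (Fα + (ε : ℂ) • Fd))
    (hFm : Fm = ((Real.sqrt 2 : ℂ))⁻¹ • (Fα - (ε : ℂ) • Fd))
    (hGp : Gp = ((Real.sqrt 2 : ℂ))⁻¹ • (Gα + (ε : ℂ) • Gd))
    (hGm : Gm = ((Real.sqrt 2 : ℂ))⁻¹ • (Gα - (ε : ℂ) • Gd)) :
    J Fp = (-(Real.cosh (l * t) / Real.sinh (l * t)) : ℂ) • Gp ∧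
    J Fm = (-(Real.sinh (l * t) / Real.cosh (l * t)) : ℂ) • Gm := by
  have hs2r : Real.sqrt 2 ≠ 0 := by positivity
  set s : ℂ := ((Real.sqrt 2 : ℝ) : ℂ) with hsdef
  have hs2 : s ≠ 0 := by rw [hsdef]; exact_mod_cast hs2r
  have hs2sq : s * s = 2 := by
    rw [hsdef]
    have : Real.sqrt 2 * Real.sqrt 2 = 2 := Real.mul_self_sqrt (by norm_num)
    exact_mod_cast this
  -- clearing the √2's
  have hsA : ∀ v : Fin 4 → ℂ, (2 : ℂ) • (s⁻¹ • v) = s • v := by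
    intro v
    rw [smul_smul, show (2 : ℂ) * s⁻¹ = s by field_simp; first | linear_combination hs2sq | linear_combination -hs2sq]
  have hsB : ∀ v : Fin 4 → ℂ, s • (s⁻¹ • v) = v := by
    intro v; rw [smul_smul, mul_inv_cancel₀ hs2, one_smul]
  have hsC : ∀ v : Fin 4 → ℂ, s • ((Complex.I * s⁻¹) • v) = Complex.I • v := by
    intro v
    rw [smul_smul, show s * (Complex.I * s⁻¹) = Complex.I by rw [mul_comm Complex.I, ← mul_assoc, mul_inv_cancel₀ hs2, one_mul]]
  have hFp2 : (2 : ℂ) • Fp =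
      (![1, 0, 0, 0] - ![0, 0, 0, 1]) + (ε : ℂ) • (![0, 0, 1, 0] - ![0, 1, 0, 0]) := by
    rw [hFp, hsA, smul_add, hFα, hsB, smul_comm, hFd, hsB]
  have hFm2 : (2 : ℂ) • Fm =
      (![1, 0, 0, 0] - ![0, 0, 0, 1]) - (ε : ℂ) • (![0, 0, 1, 0] - ![0, 1, 0, 0]) := by
    rw [hFm, hsA, smul_sub, hFα, hsB, smul_comm, hFd, hsB]
  have hGp2 : (2 : ℂ) • Gp =
      Complex.I • (![1, 0, 0, 0] + ![0, 0, 0, 1]) +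
        (ε : ℂ) • (Complex.I • (![0, 0, 1, 0] + ![0, 1, 0, 0])) := by
    rw [hGp, hsA, smul_add, hGα, hsC, smul_comm, hGd, hsC]
  have hGm2 : (2 : ℂ) • Gm =
      Complex.I • (![1, 0, 0, 0] + ![0, 0, 0, 1]) -
        (ε : ℂ) • (Complex.I • (![0, 0, 1, 0] + ![0, 1, 0, 0])) := by
    rw [hGm, hsA, smul_sub, hGα, hsC, smul_comm, hGd, hsC]
  -- real exponentials
  set x : ℝ := Real.exp (l * t) with hxdef
  have hx0 : x ≠ 0 := Real.exp_ne_zero _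
  have hxpos : 0 < x := Real.exp_pos _
  have hx1 : x ≠ 1 := fun h => hlt ((Real.exp_eq_one_iff _).mp h)
  have ha : Real.exp (2 * l * t) = x ^ 2 := by
    rw [hxdef, show 2 * l * t = l * t + l * t by ring, Real.exp_add, sq]
  have hb : Real.exp (-(2 * l * t)) = (x ^ 2)⁻¹ := by rw [Real.exp_neg, ha]
  have hcosh : Real.cosh (l * t) = (x + x⁻¹) / 2 := by
    rw [Real.cosh_eq, Real.exp_neg, hxdef]
  have hsinh : Real.sinh (l * t) = (x - x⁻¹) / 2 := by
    rw [Real.sinh_eq, Real.exp_neg, hxdef]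
  have hX0 : (x : ℂ) ≠ 0 := by exact_mod_cast hx0
  have hx2r : x ^ 2 ≠ 1 := by
    intro h
    exact hx1 (by nlinarith)
  have hX2 : (x : ℂ) ^ 2 - 1 ≠ 0 := by
    rw [sub_ne_zero]; exact_mod_cast hx2r
  have hX21 : (x : ℂ) ^ 2 + 1 ≠ 0 := by
    have : x ^ 2 + 1 ≠ 0 := by positivity
    intro h
    exact this (by exact_mod_cast h)
  have hXs : (x : ℂ) - (x : ℂ)⁻¹ ≠ 0 := by
    intro h
    apply hX2
    have : (x : ℂ) ^ 2 - 1 = ((x : ℂ) - (x : ℂ)⁻¹) * x := by field_simp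
    rw [this, h, zero_mul]
  have hXc : (x : ℂ) + (x : ℂ)⁻¹ ≠ 0 := by
    intro h
    apply hX21
    have : (x : ℂ) ^ 2 + 1 = ((x : ℂ) + (x : ℂ)⁻¹) * x := by field_simp
    rw [this, h, zero_mul]
  have haC : ((Real.exp (2 * l * t) : ℝ) : ℂ) = (x : ℂ) ^ 2 := by rw [ha]; push_cast; rfl
  have hbC : ((Real.exp (-(2 * l * t)) : ℝ) : ℂ) = ((x : ℂ) ^ 2)⁻¹ := by
    rw [hb]; push_cast; rfl
  set V1 : Fin 4 → ℂ := ![1, 0, 0, 0] + ((ε : ℂ) * (Real.exp (2 * l * t) : ℂ)) • ![0, 1, 0, 0] with hV1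
  set V2 : Fin 4 → ℂ := ![0, 0, 1, 0] + ((ε : ℂ) * (Real.exp (2 * l * t) : ℂ)) • ![0, 0, 0, 1] with hV2
  set W1 : Fin 4 → ℂ := ![1, 0, 0, 0] + ((ε : ℂ) * (Real.exp (-(2 * l * t)) : ℂ)) • ![0, 1, 0, 0] with hW1
  set W2 : Fin 4 → ℂ := ![0, 0, 1, 0] + ((ε : ℂ) * (Real.exp (-(2 * l * t)) : ℂ)) • ![0, 0, 0, 1] with hW2
  have hY0 : (x : ℂ) ^ 2 ≠ 0 := pow_ne_zero _ hX0
  have hX2n : (-1 + (x : ℂ) ^ 2) ≠ 0 := by rw [add_comm, ← sub_eq_add_neg]; exact hX2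
  have hX21n : (1 + (x : ℂ) ^ 2) ≠ 0 := by rw [add_comm]; exact hX21
  have hE2 : ((ε : ℝ) : ℂ) ^ 2 = 1 := by
    rcases hε with rfl | rfl <;> norm_num
  constructor
  · -- Fp part
    apply smul_right_injective (Fin 4 → ℂ)
      (mul_ne_zero (two_ne_zero (α := ℂ)) hX2)
    show (2 * ((x:ℂ)^2 - 1)) • J Fp = (2 * ((x:ℂ)^2 - 1)) • _
    have hrep : ((x:ℂ)^2 - 1) •
        ((![1, 0, 0, 0] - ![0, 0, 0, 1]) + ((ε : ℝ) : ℂ) • (![0, 0, 1, 0] - ![0, 1, 0, 0]))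
        = (-1 : ℂ) • V1 + ((x : ℂ) ^ 2) • W1 + (-(ε : ℂ)) • V2 +
          ((ε : ℂ) * (x : ℂ) ^ 2) • W2 := by
      funext i
      fin_cases i <;>
        · simp [hV1, hV2, hW1, hW2, haC, hbC]
          try field_simp
          try push_cast
          first
          | rfl
          | (ring_nf; first | rfl | (simp only [hE2]; try push_cast; try ring_nf; try rfl))
          | ring
    rw [← map_smul, mul_comm (2:ℂ), mul_smul, hFp2, hrep, map_add, map_add, map_add,
      map_smul, map_smul, map_smul, map_smul, h1, h2, h3, h4,
      smul_comm _ (-((Real.cosh (l * t) : ℂ) / (Real.sinh (l * t) : ℂ))), mul_smul ((x:ℂ)^2-1) (2:ℂ) Gp, hGp2, hcosh, hsinh]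
    funext i
    fin_cases i <;>
      · simp [hV1, hV2, hW1, hW2, haC, hbC]
        try push_cast
        try field_simp
        try ring_nf
        try field_simp
        all_goals (rcases hε with h | h <;> subst h <;> push_cast <;> ring)
  · -- Fm part
    apply smul_right_injective (Fin 4 → ℂ)
      (mul_ne_zero (two_ne_zero (α := ℂ)) hX21)
    show (2 * ((x:ℂ)^2 + 1)) • J Fm = (2 * ((x:ℂ)^2 + 1)) • _
    have hrep : ((x:ℂ)^2 + 1) •
        ((![1, 0, 0, 0] - ![0, 0, 0, 1]) - ((ε : ℝ) : ℂ) • (![0, 0, 1, 0] - ![0, 1, 0, 0]))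
        = (1 : ℂ) • V1 + ((x : ℂ) ^ 2) • W1 + (-(ε : ℂ)) • V2 +
          (-(ε : ℂ) * (x : ℂ) ^ 2) • W2 := by
      funext i
      fin_cases i <;>
        · simp [hV1, hV2, hW1, hW2, haC, hbC]
          try field_simp
          try push_cast
          all_goals first
          | rfl
          | (ring_nf; first | rfl | (simp only [hE2]; try push_cast; try ring_nf; try rfl))
          | ring
    rw [← map_smul, mul_comm (2:ℂ), mul_smul, hFm2, hrep, map_add, map_add, map_add,
      map_smul, map_smul, map_smul, map_smul, h1, h2, h3, h4,
      smul_comm _ (-((Real.sinh (l * t) : ℂ) / (Real.cosh (l * t) : ℂ))), mul_smul ((x:ℂ)^2+1) (2:ℂ) Gm, hGm2, hcosh, hsinh]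
    funext i
    fin_cases i <;>
      · simp [hV1, hV2, hW1, hW2, haC, hbC]
        try push_cast
        try field_simp
        try ring_nf
        try field_simp
        all_goals (rcases hε with h | h <;> subst h <;> push_cast <;> ring)
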